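/- For any involution π in the symmetric group S_n, the quantity inv(π) + exc(π) is even, where inv(π) is the number of inversions of π and exc(π) is the number of excedances of π. -/

import Mathlib

/-- The cardinality of a finset stable under a fixed-point-free involution is even. -/
lemma even_card_of_fpf_involution {α : Type*} [DecidableEq α] :
    ∀ s : Finset α, ∀ f : α → α, (∀ a ∈ s, f a ∈ s) → (∀ a ∈ s, f (f a) = a) →
      (∀ a ∈ s, f a ≠ a) → Even s.card := by
  intro s
  induction s using Finset.strongInduction with
  | _ s ih =>
    intro f h1 h2 h3
    rcases s.eq_empty_or_nonempty with rfl | ⟨a, ha⟩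
    · simp
    · have hfa : f a ∈ s := h1 a ha
      have hne : f a ≠ a := h3 a ha
      have hsub : ({a, f a} : Finset α) ⊆ s := by
        intro x hx
        rcases Finset.mem_insert.1 hx with rfl | hx
        · exact ha
        · rw [Finset.mem_singleton.1 hx]; exact hfa
      have hpairc : ({a, f a} : Finset α).card = 2 := by
        rw [Finset.card_insert_of_notMem (by simp [Ne.symm hne]), Finset.card_singleton]
      set t := s \ {a, f a} with ht
      have hss : t ⊂ s := Finset.sdiff_ssubset hsub (by simp)
      have hmemt : ∀ b, b ∈ t ↔ b ∈ s ∧ b ≠ a ∧ b ≠ f a := by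
        intro b; simp [ht, and_assoc]
      have h1' : ∀ b ∈ t, f b ∈ t := by
        intro b hb
        obtain ⟨hbs, hba, hbfa⟩ := (hmemt b).1 hb
        refine (hmemt (f b)).2 ⟨h1 b hbs, ?_, ?_⟩
        · intro h
          apply hbfa
          have hb2 := h2 b hbs
          rw [h] at hb2
          exact hb2.symm
        · intro h
          apply hba
          have hb2 := h2 b hbs
          rw [h, h2 a ha] at hb2
          exact hb2.symm
      have h2' : ∀ b ∈ t, f (f b) = b := fun b hb => h2 b ((hmemt b).1 hb).1
      have h3' : ∀ b ∈ t, f b ≠ b := fun b hb => h3 b ((hmemt b).1 hb).1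
      have heven := ih t hss f h1' h2' h3'
      have hle : 2 ≤ s.card := hpairc ▸ Finset.card_le_card hsub
      have hcard : s.card = t.card + 2 := by
        rw [ht, Finset.card_sdiff_of_subset hsub, hpairc]
        omega
      rw [hcard]
      exact heven.add even_two

/-- For an involution π in the symmetric group S_n, the quantity
inv(π) + exc(π) is even, where inv(π) is the number of inversions
(pairs (i,j) with i < j and π(i) > π(j)) and exc(π) is the number of
excedances (indices i with π(i) > i). -/
theorem inv_add_exc_even_of_involution (n : ℕ) (π : Equiv.Perm (Fin n))
    (hπ : π * π = 1) :
    Even ((Finset.univ.filter fun z : Fin n × Fin n =>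
        z.1 < z.2 ∧ π z.2 < π z.1).card +
      (Finset.univ.filter fun i : Fin n => i < π i).card) := by
  have hinv : ∀ x : Fin n, π (π x) = x := by
    intro x
    have := congrArg (fun σ : Equiv.Perm (Fin n) => σ x) hπ
    simpa using this
  set S : Finset (Fin n × Fin n) :=
    Finset.univ.filter fun z : Fin n × Fin n => z.1 < z.2 ∧ π z.2 < π z.1 with hS
  set φ : Fin n × Fin n → Fin n × Fin n := fun z => (π z.2, π z.1) with hφ
  -- split S into fixed and non-fixed points of φ
  have hsplit : S.card = (S.filter fun z => φ z = z).card +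
      (S.filter fun z => φ z ≠ z).card := by
    rw [Finset.card_filter_add_card_filter_not]
  -- non-fixed part is even
  have hNeven : Even (S.filter fun z => φ z ≠ z).card := by
    apply even_card_of_fpf_involution _ φ
    · intro z hz
      simp only [Finset.mem_filter, hS, Finset.mem_univ, true_and] at hz ⊢
      obtain ⟨⟨h1, h2⟩, h3⟩ := hz
      refine ⟨⟨h2, ?_⟩, ?_⟩
      · simp only [hφ, hinv]; exact h1
      · simp only [hφ] at h3 ⊢
        simp only [hinv]
        intro h
        apply h3
        have := congrArg Prod.fst h
        have h2' := congrArg Prod.snd h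
        simp at this h2'
        rw [Prod.ext_iff]
        constructor
        · simpa [hinv] using congrArg π h2'
        · simpa [hinv] using congrArg π this
    · intro z hz
      rw [hφ]
      simp [hinv]
    · intro z hz
      exact (Finset.mem_filter.1 hz).2
  -- fixed part equals the excedance count
  have hFix : (S.filter fun z => φ z = z).card =
      (Finset.univ.filter fun i : Fin n => i < π i).card := by
    apply Finset.card_bij (fun z _ => z.1)
    · intro z hz
      simp only [Finset.mem_filter, hS, Finset.mem_univ, true_and] at hz ⊢
      obtain ⟨⟨h1, h2⟩, h3⟩ := hz
      have : π z.1 = z.2 := by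
        have := congrArg Prod.fst h3
        rw [hφ] at this
        simp only at this
        have h4 := congrArg Prod.snd h3
        rw [hφ] at h4
        simp only at h4
        exact h4
      rw [this]; exact h1
    · intro z1 hz1 z2 hz2 h
      simp only [Finset.mem_filter, hS] at hz1 hz2
      have e1 : π z1.1 = z1.2 := by
        have := congrArg Prod.snd hz1.2
        rw [hφ] at this; exact this
      have e2 : π z2.1 = z2.2 := by
        have := congrArg Prod.snd hz2.2
        rw [hφ] at this; exact this
      ext
      · exact congrArg Fin.val h
      · rw [← e1, ← e2, h]
    · intro i hi
      simp only [Finset.mem_filter, Finset.mem_univ, true_and] at hi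
      refine ⟨(i, π i), ?_, rfl⟩
      simp only [Finset.mem_filter, hS, Finset.mem_univ, true_and]
      refine ⟨⟨hi, ?_⟩, ?_⟩
      · rw [hinv]; exact hi
      · rw [hφ]; simp [hinv]
  rw [hsplit, hFix]
  obtain ⟨k, hk⟩ := hNeven
  exact ⟨(Finset.univ.filter fun i : Fin n => i < π i).card + k, by omega⟩
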